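/- Let p₀, p₁, …, p_m be points in ℝ² with pᵢ ≠ pᵢ₊₁ for every i, and suppose the polygonal path on p₀, …, p_m has increasing chords. Let k ≥ 2 and let i be an index with 1 ≤ i and i + k − 1 ≤ m − 1, and suppose the path makes a left turn at each of the consecutive vertices p_i, p_{i+1}, …, p_{i+k−1}. Then the sum ∑_{j=i}^{i+k−1} ∠(p_{j−1}, p_j, p_{j+1}) is at least π·(k−1). -/

import Mathlib

set_option maxHeartbeats 1000000


/-- The point of the polygonal path `p 0, p 1, …` lying on segment `i`
(from `p i` to `p (i+1)`) at fraction `s ∈ [0,1]`. -/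
noncomputable def polyPt (p : ℕ → EuclideanSpace ℝ (Fin 2)) (i : ℕ) (s : ℝ) :
    EuclideanSpace ℝ (Fin 2) :=
  (1 - s) • p i + s • p (i + 1)

/-- `(i, s)` comes no later than `(j, t)` in the lexicographic order on parameters
of points of a polygonal path. -/
def ParamLE (i : ℕ) (s : ℝ) (j : ℕ) (t : ℝ) : Prop :=
  i < j ∨ (i = j ∧ s ≤ t)

/-- The polygonal path on the points `p 0, …, p m` (with `m` segments, indexed
`0, …, m-1`) is self-approaching: for any three of its points `a, b, c` in order
along the path, `dist a c ≥ dist b c`. -/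
def IsSelfApproachingPoly (m : ℕ) (p : ℕ → EuclideanSpace ℝ (Fin 2)) : Prop :=
  ∀ (i j k : ℕ) (s t u : ℝ), i < m → j < m → k < m →
    s ∈ Set.Icc (0 : ℝ) 1 → t ∈ Set.Icc (0 : ℝ) 1 → u ∈ Set.Icc (0 : ℝ) 1 →
    ParamLE i s j t → ParamLE j t k u →
    dist (polyPt p j t) (polyPt p k u) ≤ dist (polyPt p i s) (polyPt p k u)

/-- The polygonal path on the points `p 0, …, p m` has increasing chords: for any
four of its points `a, b, c, d` in order along the path, `dist a d ≥ dist b c`. -/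
def IsIncreasingChordsPoly (m : ℕ) (p : ℕ → EuclideanSpace ℝ (Fin 2)) : Prop :=
  ∀ (i j k l : ℕ) (s t u v : ℝ), i < m → j < m → k < m → l < m →
    s ∈ Set.Icc (0 : ℝ) 1 → t ∈ Set.Icc (0 : ℝ) 1 → u ∈ Set.Icc (0 : ℝ) 1 →
    v ∈ Set.Icc (0 : ℝ) 1 →
    ParamLE i s j t → ParamLE j t k u → ParamLE k u l v →
    dist (polyPt p j t) (polyPt p k u) ≤ dist (polyPt p i s) (polyPt p l v)



open Finset Real
open scoped RealInnerProductSpace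

private lemma icp_telescope {M : Type*} [AddCommGroup M] (g : ℕ → M) {a b : ℕ} (h : a ≤ b) :
    ∑ r ∈ Finset.Ico a b, (g (r + 1) - g r) = g b - g a := by
  induction b, h using Nat.le_induction with
  | base => simp
  | succ b hb ih => rw [Finset.sum_Ico_succ_top (by omega), ih]; abel

private lemma icp_aux1 {E : Type*} [NormedAddCommGroup E] [InnerProductSpace ℝ E]
    {v d : E} (hd : d ≠ 0) (h : ∀ t : ℝ, 0 ≤ t → t ≤ 1 → ‖v‖ ≤ ‖v + t • d‖) :
    0 ≤ ⟪v, d⟫ := by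
  by_contra hq
  push_neg at hq
  set q := ⟪v, d⟫ with hqdef
  have hd2 : 0 < ‖d‖ ^ 2 := by
    have : ‖d‖ ≠ 0 := norm_ne_zero_iff.mpr hd
    positivity
  set t : ℝ := min 1 (-q / ‖d‖ ^ 2) with ht
  have ht0 : 0 < t := lt_min one_pos (div_pos (neg_pos.mpr hq) hd2)
  have ht1 : t ≤ 1 := min_le_left _ _
  have ht2 : t * ‖d‖ ^ 2 ≤ -q := by
    rw [← le_div_iff₀ hd2]
    exact min_le_right _ _
  have h1 := h t ht0.le ht1
  have h2 : ‖v‖ ^ 2 ≤ ‖v + t • d‖ ^ 2 := by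
    nlinarith [norm_nonneg v, norm_nonneg (v + t • d)]
  rw [norm_add_sq_real, real_inner_smul_right, norm_smul, Real.norm_eq_abs,
    abs_of_pos ht0, mul_pow] at h2
  nlinarith

/-- The key combinatorial lemma: given positive weights `x` and a sequence of
"cumulative direction angles" `φ` increasing in steps in `(0, π/2]`, subject to
the chord positivity constraints, the total turning `φ N` is at most `π`. -/
private lemma icp_key (b0 N : ℕ) (hbN : b0 < N) (x φ : ℕ → ℝ)
    (hx : ∀ r, b0 ≤ r → r ≤ N → 0 < x r)
    (hφ0 : φ b0 = 0)
    (hstep : ∀ r, b0 ≤ r → r < N → 0 < φ (r + 1) - φ r ∧ φ (r + 1) - φ r ≤ π / 2)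
    (hC1 : ∀ j l, b0 ≤ j → j < l → l ≤ N →
      0 ≤ ∑ r ∈ Finset.Ico (j + 1) (l + 1), x j * x r * Real.cos (φ r - φ j))
    (hC2 : ∀ j l, b0 ≤ j → j < l → l ≤ N →
      0 ≤ ∑ r ∈ Finset.Ico j l, x r * x l * Real.cos (φ l - φ r)) :
    φ N ≤ π := by
  classical
  by_contra hπ
  push_neg at hπ
  -- monotonicity of φ
  have hmono : ∀ r s, b0 ≤ r → r ≤ s → s ≤ N → φ r ≤ φ s := by
    intro r s hbr hrs hsN
    induction s, hrs using Nat.le_induction with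
    | base => exact le_rfl
    | succ s hs ih =>
      have h1 := ih (by omega)
      have h2 := hstep s (by omega) (by omega)
      linarith
  -- least l with φ l > π
  have hex : ∃ l, b0 < l ∧ l ≤ N ∧ π < φ l := ⟨N, hbN, le_rfl, hπ⟩
  obtain ⟨hbl, hlN, hπl⟩ := Nat.find_spec hex
  have hmin : ∀ r, b0 ≤ r → r < Nat.find hex → φ r ≤ π := by
    intro r hbr hrl
    rcases eq_or_lt_of_le hbr with h | h
    · rw [← h, hφ0]; exact Real.pi_nonneg
    · by_contra hc
      push_neg at hc
      exact Nat.find_min hex hrl ⟨h, by omega, hc⟩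
  obtain ⟨l', hleq⟩ : ∃ l', Nat.find hex = l' + 1 := ⟨Nat.find hex - 1, by omega⟩
  rw [hleq] at hbl hlN hπl hmin
  set δ : ℝ := φ (l' + 1) - π with hδdef
  have hδ0 : 0 < δ := by simp only [hδdef]; linarith
  have hstepl := hstep l' (by omega) (by omega)
  have hl'π : φ l' ≤ π := hmin l' (by omega) (by omega)
  have hδ2 : δ ≤ π / 2 := by simp only [hδdef]; linarith
  -- greatest js ≤ l' with φ js ≤ δ
  set Q : ℕ → Prop := fun j => b0 ≤ j ∧ φ j ≤ δ with hQdef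
  have hQb0 : Q b0 := ⟨le_rfl, by rw [hφ0]; linarith⟩
  set js := Nat.findGreatest Q l' with hjdef
  have hbj : b0 ≤ js := (Nat.findGreatest_spec (P := Q) (by omega) hQb0).1
  have hjl' : js ≤ l' := Nat.findGreatest_le l'
  have hβδ : φ js ≤ δ := (Nat.findGreatest_spec (P := Q) (by omega) hQb0).2
  set β : ℝ := φ js with hβdef
  have hβ0 : 0 ≤ β := by
    have := hmono b0 js le_rfl hbj (by omega)
    rw [hφ0] at this; exact this
  have hmidφ : ∀ r, js < r → r ≤ l' → δ < φ r ∧ φ r ≤ π := by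
    intro r h1 h2
    have hnq : ¬ Q r := Nat.findGreatest_is_greatest h1 h2
    have hbr : b0 ≤ r := by omega
    constructor
    · by_contra hc; push_neg at hc; exact hnq ⟨hbr, hc⟩
    · exact hmin r hbr (by omega)
  -- middle is nonempty: js < l'
  have hjl'' : js < l' := by
    rcases eq_or_lt_of_le hjl' with h | h
    · exfalso
      have : φ l' = β := by rw [hβdef, h]
      have : π + δ - (π / 2) ≤ β := by
        rw [← this]; simp only [hδdef] at *; linarith
      linarith [Real.pi_pos]
    · exact h
  -- the two chord constraints
  have hA := hC1 js (l' + 1) hbj (by omega) hlN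
  have hB := hC2 js (l' + 1) hbj (by omega) hlN
  -- rewrite hA
  rw [Finset.sum_Ico_succ_top (by omega : js + 1 ≤ l' + 1)] at hA
  rw [Finset.sum_eq_sum_Ico_succ_bot (by omega : js < l' + 1)] at hB
  set A : ℝ := ∑ r ∈ Finset.Ico (js + 1) (l' + 1), x r * Real.cos (φ r - β) with hAdef
  set B : ℝ := ∑ r ∈ Finset.Ico (js + 1) (l' + 1), x r * Real.cos (φ r - δ) with hBdef
  have hxj : 0 < x js := hx js hbj (by omega)
  have hxl : 0 < x (l' + 1) := hx (l' + 1) (by omega) hlN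
  have hcosφl : Real.cos (φ (l' + 1) - β) = -Real.cos (δ - β) := by
    have : φ (l' + 1) - β = (δ - β) + π := by simp only [hδdef]; ring
    rw [this, Real.cos_add_pi]
  have hA' : x (l' + 1) * Real.cos (δ - β) ≤ A := by
    have h1 : ∑ r ∈ Finset.Ico (js + 1) (l' + 1), x js * x r * Real.cos (φ r - φ js)
        = x js * A := by
      rw [hAdef, Finset.mul_sum]
      exact Finset.sum_congr rfl fun r _ => by rw [← hβdef]; ring
    rw [h1, ← hβdef, hcosφl] at hA
    nlinarith
  have hB' : B ≤ -(x js * Real.cos (δ - β)) := by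
    have h1 : ∑ r ∈ Finset.Ico (js + 1) (l' + 1), x r * x (l' + 1) * Real.cos (φ (l' + 1) - φ r)
        = x (l' + 1) * (-B) := by
      rw [hBdef, mul_neg, Finset.mul_sum, ← neg_one_mul, Finset.mul_sum]
      refine Finset.sum_congr rfl fun r _ => ?_
      have hφφ : φ (l' + 1) - φ r = -(φ r - δ) + π := by simp only [hδdef]; ring
      rw [hφφ, Real.cos_add_pi, Real.cos_neg]
      ring
    rw [h1, ← hβdef, hcosφl] at hB
    nlinarith
  have hAB : A ≤ B := by
    refine Finset.sum_le_sum fun r hr => ?_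
    simp only [Finset.mem_Ico] at hr
    have hφr := hmidφ r (by omega) (by omega)
    have hxr : 0 < x r := hx r (by omega) (by omega)
    have hcos : Real.cos (φ r - β) ≤ Real.cos (φ r - δ) :=
      Real.cos_le_cos_of_nonneg_of_le_pi (by linarith) (by linarith) (by linarith)
    nlinarith
  have hδβ : Real.cos (δ - β) ≤ 0 := by nlinarith
  have hcos0 : Real.cos (δ - β) = 0 := by
    have : 0 ≤ Real.cos (δ - β) :=
      Real.cos_nonneg_of_mem_Icc ⟨by linarith, by linarith⟩
    linarith
  -- so δ = π/2 and β = 0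
  have hedge : δ - β = π / 2 := by
    by_contra hc
    have h1 : δ - β < π / 2 := lt_of_le_of_ne (by linarith) hc
    have : 0 < Real.cos (δ - β) :=
      Real.cos_pos_of_mem_Ioo ⟨by linarith, h1⟩
    linarith
  have hβzero : β = 0 := by linarith
  have hδhalf : δ = π / 2 := by linarith
  -- now A < 0 but x l * cos(δ-β) = 0 ≤ A
  have hA0 : A < 0 := by
    rw [hAdef]
    refine Finset.sum_neg (fun r hr => ?_) ⟨js + 1, Finset.mem_Ico.mpr ⟨le_rfl, by omega⟩⟩
    simp only [Finset.mem_Ico] at hr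
    have hφr := hmidφ r (by omega) (by omega)
    have hxr : 0 < x r := hx r (by omega) (by omega)
    have h2 : π / 2 < φ r - β := by rw [hβzero]; linarith
    have h3 : φ r - β < π + π / 2 := by rw [hβzero]; linarith [Real.pi_pos]
    have h4 : Real.cos (φ r - β) < 0 := Real.cos_neg_of_pi_div_two_lt_of_lt h2 h3
    nlinarith
  rw [hcos0] at hA'
  simp at hA'
  linarith

/-- In an increasing-chord polygonal path `p 0, …, p m`, for any chain of `k ≥ 2`
consecutive left turns at the vertices `p i, p (i+1), …, p (i+k-1)`
(with `1 ≤ i` and `i + k - 1 ≤ m - 1`), the sum of the `k` angles at these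
vertices is at least `π * (k - 1)`.  A left turn at `p j` means that the determinant
of the vectors `p j - p (j-1)` and `p (j+1) - p j` is strictly positive. -/
theorem increasingChords_left_turn_angle_sum (m : ℕ)
    (p : ℕ → EuclideanSpace ℝ (Fin 2)) (hne : ∀ i < m, p i ≠ p (i + 1))
    (hic : IsIncreasingChordsPoly m p)
    (k i : ℕ) (hk : 2 ≤ k) (hi : 1 ≤ i) (hik : i + k ≤ m)
    (hleft : ∀ j : ℕ, i ≤ j → j < i + k →
      0 < (p j - p (j - 1)) 0 * (p (j + 1) - p j) 1
            - (p j - p (j - 1)) 1 * (p (j + 1) - p j) 0) :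
    Real.pi * ((k : ℝ) - 1) ≤
      ∑ j ∈ Finset.range k,
        EuclideanGeometry.angle (p (i + j - 1)) (p (i + j)) (p (i + j + 1)) := by
  classical
  obtain ⟨b0, rfl⟩ : ∃ b0, i = b0 + 1 := ⟨i - 1, by omega⟩
  set N := b0 + k with hNdef
  have hNm : N < m := by omega
  -- directions
  set d : ℕ → EuclideanSpace ℝ (Fin 2) := fun j => p (j + 1) - p j with hddef
  have hd0 : ∀ j, j < m → d j ≠ 0 := fun j hj => sub_ne_zero.mpr (hne j hj).symm
  have hdnorm : ∀ j, j < m → (0 : ℝ) < ‖d j‖ := fun j hj => norm_pos_iff.mpr (hd0 j hj)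
  -- inner product formula in coordinates
  have hinner : ∀ u v : EuclideanSpace ℝ (Fin 2), ⟪u, v⟫ = u 0 * v 0 + u 1 * v 1 := by
    intro u v
    simp [PiLp.inner_apply, Fin.sum_univ_two, RCLike.inner_apply]; ring
  -- complexification of the directions
  set z : ℕ → ℂ := fun j => ⟨d j 0, d j 1⟩ with hzdef
  have habs : ∀ j, ‖z j‖ = ‖d j‖ := by
    intro j
    rw [hzdef]
    rw [Complex.norm_def, Complex.normSq_mk, EuclideanSpace.norm_eq]
    simp [Fin.sum_univ_two, sq]
  have hz0 : ∀ j, j < m → z j ≠ 0 := by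
    intro j hj h0
    have h1 := habs j
    rw [h0] at h1
    simp at h1
    exact (hdnorm j hj).ne h1
  have hre : ∀ j l, ((starRingEnd ℂ) (z j) * z l).re = ⟪d j, d l⟫ := by
    intro j l
    rw [hinner, hzdef]
    simp [Complex.mul_re]
  have him : ∀ j l, ((starRingEnd ℂ) (z j) * z l).im = d j 0 * d l 1 - d j 1 * d l 0 := by
    intro j l
    rw [hzdef]
    simp [Complex.mul_im]
    ring
  -- basic facts about polyPt
  have hpoly0 : ∀ j, polyPt p j 0 = p j := by intro j; simp [polyPt]
  have hpoly1 : ∀ j, polyPt p j 1 = p (j + 1) := by intro j; simp [polyPt]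
  have hpolyt : ∀ (j : ℕ) (t : ℝ), polyPt p j t = p j + t • (p (j + 1) - p j) := by
    intro j t; unfold polyPt; module
  -- the two chord inequalities
  have lemB1 : ∀ j l, j < l → l < m → 0 ≤ ⟪p l - p j, d l⟫ := by
    intro j l hjl hlm
    apply icp_aux1 (hd0 l hlm)
    intro t ht0 ht1
    have h := hic j j l l 0 0 0 t (by omega) (by omega) hlm hlm
      ⟨le_rfl, zero_le_one⟩ ⟨le_rfl, zero_le_one⟩ ⟨le_rfl, zero_le_one⟩ ⟨ht0, ht1⟩
      (Or.inr ⟨rfl, le_rfl⟩) (Or.inl hjl) (Or.inr ⟨rfl, ht0⟩)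
    rw [hpoly0, hpoly0, hpolyt, dist_eq_norm, dist_eq_norm] at h
    calc ‖p l - p j‖ = ‖p j - p l‖ := norm_sub_rev _ _
      _ ≤ ‖p j - (p l + t • (p (l + 1) - p l))‖ := h
      _ = ‖-(p l - p j + t • d l)‖ := by
          rw [hddef]; congr 1; module
      _ = ‖p l - p j + t • d l‖ := norm_neg _
  have lemA2 : ∀ j l, j < l → l < m → 0 ≤ ⟪p (l + 1) - p (j + 1), d j⟫ := by
    intro j l hjl hlm
    apply icp_aux1 (hd0 j (by omega))
    intro t ht0 ht1
    have h := hic j j l l (1 - t) 1 1 1 (by omega) (by omega) hlm hlm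
      ⟨by linarith, by linarith⟩ ⟨zero_le_one, le_rfl⟩ ⟨zero_le_one, le_rfl⟩ ⟨zero_le_one, le_rfl⟩
      (Or.inr ⟨rfl, by linarith⟩) (Or.inl hjl) (Or.inr ⟨rfl, le_rfl⟩)
    rw [hpoly1, hpoly1, hpolyt, dist_eq_norm, dist_eq_norm] at h
    calc ‖p (l + 1) - p (j + 1)‖ = ‖p (j + 1) - p (l + 1)‖ := norm_sub_rev _ _
      _ ≤ ‖p j + (1 - t) • (p (j + 1) - p j) - p (l + 1)‖ := h
      _ = ‖-(p (l + 1) - p (j + 1) + t • d j)‖ := by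
          rw [hddef]; congr 1; module
      _ = ‖p (l + 1) - p (j + 1) + t • d j‖ := norm_neg _
  -- turning angles
  set a : ℕ → ℝ := fun v => Complex.arg ((starRingEnd ℂ) (z (v - 1)) * z v) with hadef
  have ha_eq : ∀ r : ℕ, a (r + 1) = Complex.arg ((starRingEnd ℂ) (z r) * z (r + 1)) := by
    intro r; rw [hadef]; simp
  have him_pos : ∀ r, b0 ≤ r → r < N → 0 < ((starRingEnd ℂ) (z r) * z (r + 1)).im := by
    intro r h1 h2
    rw [him]
    have h := hleft (r + 1) (by omega) (by omega)
    simp only [Nat.add_sub_cancel] at h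
    simp only [hddef]
    convert h using 2 <;> omega
  have hq0 : ∀ r, b0 ≤ r → r < N → (starRingEnd ℂ) (z r) * z (r + 1) ≠ 0 := by
    intro r h1 h2 h0
    have := him_pos r h1 h2
    rw [h0] at this
    simp at this
  have hre_nonneg : ∀ r, b0 ≤ r → r < N → 0 ≤ ((starRingEnd ℂ) (z r) * z (r + 1)).re := by
    intro r h1 h2
    rw [hre]
    have h := lemB1 r (r + 1) (by omega) (by omega)
    simpa only [hddef] using h
  have ha_pos : ∀ r, b0 ≤ r → r < N → 0 < a (r + 1) := by
    intro r h1 h2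
    rw [ha_eq]
    by_contra hc
    push_neg at hc
    have hs : 0 < Real.sin (Complex.arg ((starRingEnd ℂ) (z r) * z (r + 1))) := by
      rw [Complex.sin_arg]
      exact div_pos (him_pos r h1 h2) (norm_pos_iff.mpr (hq0 r h1 h2))
    have hmem := Complex.arg_mem_Ioc ((starRingEnd ℂ) (z r) * z (r + 1))
    have : Real.sin (Complex.arg ((starRingEnd ℂ) (z r) * z (r + 1))) ≤ 0 :=
      Real.sin_nonpos_of_nonpos_of_neg_pi_le hc (le_of_lt hmem.1)
    linarith
  have ha_le : ∀ r, b0 ≤ r → r < N → a (r + 1) ≤ π / 2 := by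
    intro r h1 h2
    rw [ha_eq]
    have := Complex.abs_arg_le_pi_div_two_iff.mpr (hre_nonneg r h1 h2)
    exact (abs_le.mp this).2
  -- cumulative angle
  set φ : ℕ → ℝ := fun r => ∑ v ∈ Finset.Ico (b0 + 1) (r + 1), a v with hφdef
  have hφb0 : φ b0 = 0 := by rw [hφdef]; simp
  have hφstep : ∀ r, b0 ≤ r → φ (r + 1) = φ r + a (r + 1) := by
    intro r h
    rw [hφdef]
    exact Finset.sum_Ico_succ_top (by omega) a
  -- the exponential identity
  have hexp : ∀ r s, b0 ≤ r → r ≤ s → s ≤ N →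
      (starRingEnd ℂ) (z r) * z s
        = ((‖d r‖ * ‖d s‖ : ℝ) : ℂ) * Complex.exp ((φ s - φ r : ℝ) * Complex.I) := by
    intro r s hbr hrs hsN
    induction s, hrs using Nat.le_induction with
    | base =>
      have h1 : ((φ r - φ r : ℝ) : ℂ) = 0 := by norm_num
      rw [h1, zero_mul, Complex.exp_zero, mul_one, mul_comm, Complex.mul_conj]
      rw [Complex.normSq_eq_norm_sq, habs]
      push_cast
      ring
    | succ s hs ih =>
      have hsN' : s ≤ N := by omega
      have ihs := ih hsN'
      have hzs : z s ≠ 0 := hz0 s (by omega)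
      have habsq : ‖(starRingEnd ℂ) (z s) * z (s + 1)‖ = ‖d s‖ * ‖d (s + 1)‖ := by
        rw [norm_mul, Complex.norm_conj, habs, habs]
      have hq : (starRingEnd ℂ) (z s) * z (s + 1)
          = ((‖d s‖ * ‖d (s + 1)‖ : ℝ) : ℂ) * Complex.exp ((a (s + 1) : ℝ) * Complex.I) := by
        conv_lhs => rw [← Complex.norm_mul_exp_arg_mul_I ((starRingEnd ℂ) (z s) * z (s + 1))]
        rw [habsq, ← ha_eq]
      have hnsq : ((Complex.normSq (z s) : ℝ) : ℂ) ≠ 0 := by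
        simp only [ne_eq, Complex.ofReal_eq_zero]
        exact ne_of_gt (Complex.normSq_pos.mpr hzs)
      apply mul_left_cancel₀ hnsq
      calc ((Complex.normSq (z s) : ℝ) : ℂ) * ((starRingEnd ℂ) (z r) * z (s + 1))
          = ((starRingEnd ℂ) (z r) * z s) * ((starRingEnd ℂ) (z s) * z (s + 1)) := by
            rw [show ((Complex.normSq (z s) : ℝ) : ℂ) = (starRingEnd ℂ) (z s) * z s from by
              rw [mul_comm, Complex.mul_conj]]
            ring
        _ = (((‖d r‖ * ‖d s‖ : ℝ) : ℂ) * Complex.exp ((φ s - φ r : ℝ) * Complex.I))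
              * (((‖d s‖ * ‖d (s + 1)‖ : ℝ) : ℂ) * Complex.exp ((a (s + 1) : ℝ) * Complex.I)) := by
            rw [ihs, hq]
        _ = ((Complex.normSq (z s) : ℝ) : ℂ)
              * (((‖d r‖ * ‖d (s + 1)‖ : ℝ) : ℂ)
                * Complex.exp ((φ (s + 1) - φ r : ℝ) * Complex.I)) := by
            rw [mul_assoc, mul_comm (Complex.exp _), mul_assoc, ← Complex.exp_add]
            have he : ((a (s + 1) : ℝ) : ℂ) * Complex.I + ((φ s - φ r : ℝ) : ℂ) * Complex.I
                = ((φ (s + 1) - φ r : ℝ) : ℂ) * Complex.I := by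
              rw [hφstep s (by omega)]
              push_cast
              ring
            rw [he]
            rw [show ((Complex.normSq (z s) : ℝ) : ℂ) = ((‖d s‖ : ℝ) : ℂ) * ((‖d s‖ : ℝ) : ℂ) from by
              rw [Complex.normSq_eq_norm_sq, habs]; push_cast; ring]
            push_cast
            ring
  -- the cosine formula for inner products
  have hcos : ∀ r s, b0 ≤ r → r ≤ s → s ≤ N →
      ⟪d r, d s⟫ = ‖d r‖ * ‖d s‖ * Real.cos (φ s - φ r) := by
    intro r s h1 h2 h3
    rw [← hre, hexp r s h1 h2 h3, Complex.re_ofReal_mul, Complex.exp_ofReal_mul_I_re]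
  -- telescoping
  have hsumd : ∀ a b : ℕ, a ≤ b → (∑ r ∈ Finset.Ico a b, d r) = p b - p a := by
    intro a b h
    rw [hddef]
    exact icp_telescope p h
  -- the constraints of the key lemma
  have hC1 : ∀ j l, b0 ≤ j → j < l → l ≤ N →
      0 ≤ ∑ r ∈ Finset.Ico (j + 1) (l + 1), ‖d j‖ * ‖d r‖ * Real.cos (φ r - φ j) := by
    intro j l h1 h2 h3
    have h := lemA2 j l h2 (by omega)
    rw [← hsumd (j + 1) (l + 1) (by omega), sum_inner] at h
    refine le_of_le_of_eq h (Finset.sum_congr rfl fun r hr => ?_)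
    simp only [Finset.mem_Ico] at hr
    rw [real_inner_comm, hcos j r h1 (by omega) (by omega)]
  have hC2 : ∀ j l, b0 ≤ j → j < l → l ≤ N →
      0 ≤ ∑ r ∈ Finset.Ico j l, ‖d r‖ * ‖d l‖ * Real.cos (φ l - φ r) := by
    intro j l h1 h2 h3
    have h := lemB1 j l h2 (by omega)
    rw [← hsumd j l (by omega), sum_inner] at h
    refine le_of_le_of_eq h (Finset.sum_congr rfl fun r hr => ?_)
    simp only [Finset.mem_Ico] at hr
    rw [hcos r l (by omega) (by omega) h3]
  -- apply the key lemma
  have hkey : φ N ≤ π := by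
    apply icp_key b0 N (by omega) (fun r => ‖d r‖) φ
      (fun r h1 h2 => hdnorm r (by omega)) hφb0 ?_ hC1 hC2
    intro r h1 h2
    have hp := ha_pos r h1 h2
    have hl := ha_le r h1 h2
    rw [hφstep r h1]
    constructor <;> linarith
  -- convert the angles
  have hang : ∀ j, j < k →
      EuclideanGeometry.angle (p (b0 + 1 + j - 1)) (p (b0 + 1 + j)) (p (b0 + 1 + j + 1))
        = π - a (b0 + j + 1) := by
    intro j hj
    have e1 : b0 + 1 + j - 1 = b0 + j := by omega
    have e2 : b0 + 1 + j = b0 + j + 1 := by omega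
    have e3 : b0 + 1 + j + 1 = b0 + j + 1 + 1 := by omega
    rw [e1, e3, e2]
    have hrN : b0 + j < N := by omega
    have h0 : EuclideanGeometry.angle (p (b0 + j)) (p (b0 + j + 1)) (p (b0 + j + 1 + 1))
        = InnerProductGeometry.angle (-(d (b0 + j))) (d (b0 + j + 1)) := by
      unfold EuclideanGeometry.angle
      congr 1
      · show p (b0 + j) - p (b0 + j + 1) = -(d (b0 + j))
        rw [hddef]
        exact (neg_sub _ _).symm
    rw [h0, InnerProductGeometry.angle_neg_left]
    congr 1
    have hqq : (starRingEnd ℂ) (z (b0 + j)) * z (b0 + j + 1) ≠ 0 :=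
      hq0 (b0 + j) (by omega) hrN
    have habsq : ‖d (b0 + j)‖ * ‖d (b0 + j + 1)‖
        = ‖(starRingEnd ℂ) (z (b0 + j)) * z (b0 + j + 1)‖ := by
      rw [norm_mul, Complex.norm_conj, habs, habs]
    have hdefangle : InnerProductGeometry.angle (d (b0 + j)) (d (b0 + j + 1))
        = Real.arccos (⟪d (b0 + j), d (b0 + j + 1)⟫ / (‖d (b0 + j)‖ * ‖d (b0 + j + 1)‖)) := rfl
    rw [hdefangle, ← hre, habsq, ← Complex.cos_arg hqq, ← ha_eq,
      Real.arccos_cos (le_of_lt (ha_pos (b0 + j) (by omega) hrN))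
        (le_trans (ha_le (b0 + j) (by omega) hrN) (by linarith [Real.pi_pos]))]
  -- final computation
  have hφN : φ N = ∑ j ∈ Finset.range k, a (b0 + j + 1) := by
    simp only [hφdef]
    rw [Finset.sum_Ico_eq_sum_range]
    have hkk : N + 1 - (b0 + 1) = k := by omega
    rw [hkk]
    exact Finset.sum_congr rfl fun j _ => by rw [show b0 + 1 + j = b0 + j + 1 from by omega]
  rw [Finset.sum_congr rfl (fun j hj => hang j (Finset.mem_range.mp hj))]
  rw [Finset.sum_sub_distrib, Finset.sum_const, Finset.card_range, nsmul_eq_mul, ← hφN]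
  have hk1 : (1 : ℝ) ≤ (k : ℝ) := by exact_mod_cast Nat.one_le_iff_ne_zero.mpr (by omega)
  nlinarith [Real.pi_pos, hkey]
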